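/- Let j_m ∈ ℕ and set θ_j = 2^{−max(j−j_m,0)}. Let γ > 0 and 0 < β₁ ≤ β₂. Then there exist constants c > 0 and g* > 0, depending only on γ, β₁, β₂, such that the following holds for every 0 < g_0 ≤ g*: if (g_j)_{j≥0} is a positive sequence satisfying β₁ θ_j² g_j² ≤ g_j − g_{j+1} ≤ β₂ θ_j² g_j² for all j, and (ε_j)_{j≥0} is a sequence satisfying ε_0 = (1/5) g_0^{1/2} and ε_{j+1} ≥ ε̄_j − γ θ_j² ε̄_j² for all j, where ε̄_j = min(ε_j, (1/5) g_j^{1/2}), then ε_j ≥ c·g_j for every j ∈ ℕ. -/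

import Mathlib

/-- `θ_j = 2^{-(j - j_m)_+}`. -/
noncomputable def theta (jm j : ℕ) : ℝ := ((2 : ℝ) ^ (j - jm))⁻¹

lemma theta_pos (jm j : ℕ) : 0 < theta jm j := by
  unfold theta; positivity

lemma theta_le_one (jm j : ℕ) : theta jm j ≤ 1 := by
  unfold theta
  rw [inv_le_one_iff₀]
  right
  exact one_le_pow₀ (by norm_num)

set_option maxHeartbeats 1000000 in
theorem stmt12 (γ β₁ β₂ : ℝ) (hγ : 0 < γ) (hβ₁ : 0 < β₁) (hβ : β₁ ≤ β₂) :
    ∃ c gs : ℝ, 0 < c ∧ 0 < gs ∧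
      ∀ (jm : ℕ) (g ε : ℕ → ℝ),
        (∀ j, 0 < g j) → g 0 ≤ gs →
        (∀ j, β₁ * theta jm j ^ 2 * g j ^ 2 ≤ g j - g (j + 1) ∧
              g j - g (j + 1) ≤ β₂ * theta jm j ^ 2 * g j ^ 2) →
        ε 0 = (1 / 5) * Real.sqrt (g 0) →
        (∀ j, min (ε j) ((1 / 5) * Real.sqrt (g j)) -
              γ * theta jm j ^ 2 * (min (ε j) ((1 / 5) * Real.sqrt (g j))) ^ 2
            ≤ ε (j + 1)) →
        ∀ j, c * g j ≤ ε j := by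
  obtain ⟨c, gs, hc, hgs, hcγ, hsgs1, hsgs2⟩ :
      ∃ c gs : ℝ, 0 < c ∧ 0 < gs ∧ γ * c ≤ β₁ ∧
        c * Real.sqrt gs ≤ 1 / 5 ∧ Real.sqrt gs ≤ 5 / (2 * γ) := by
    refine ⟨min (β₁ / γ) 1, min (1 / (25 * (min (β₁ / γ) 1) ^ 2)) (25 / (4 * γ ^ 2)),
      lt_min (by positivity) one_pos, lt_min (by positivity) (by positivity), ?_, ?_, ?_⟩
    · have h1 : min (β₁ / γ) 1 ≤ β₁ / γ := min_le_left _ _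
      calc γ * min (β₁ / γ) 1 ≤ γ * (β₁ / γ) := by nlinarith
      _ = β₁ := by field_simp
    · set c := min (β₁ / γ) 1 with hc_def
      have hc : 0 < c := lt_min (by positivity) one_pos
      have h1 : min (1 / (25 * c ^ 2)) (25 / (4 * γ ^ 2)) ≤ 1 / (25 * c ^ 2) :=
        min_le_left _ _
      have h2 : (1 : ℝ) / (25 * c ^ 2) = (1 / (5 * c)) ^ 2 := by field_simp; ring
      have h3 : Real.sqrt (min (1 / (25 * c ^ 2)) (25 / (4 * γ ^ 2))) ≤ 1 / (5 * c) := by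
        calc Real.sqrt (min (1 / (25 * c ^ 2)) (25 / (4 * γ ^ 2)))
            ≤ Real.sqrt (1 / (25 * c ^ 2)) := Real.sqrt_le_sqrt h1
        _ = 1 / (5 * c) := by rw [h2, Real.sqrt_sq (by positivity)]
      calc c * Real.sqrt (min (1 / (25 * c ^ 2)) (25 / (4 * γ ^ 2))) ≤ c * (1 / (5 * c)) := by
            nlinarith
      _ = 1 / 5 := by field_simp
    · set c := min (β₁ / γ) 1 with hc_def
      have h1 : min (1 / (25 * c ^ 2)) (25 / (4 * γ ^ 2)) ≤ 25 / (4 * γ ^ 2) :=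
        min_le_right _ _
      have h2 : (25 : ℝ) / (4 * γ ^ 2) = (5 / (2 * γ)) ^ 2 := by field_simp; ring
      calc Real.sqrt (min (1 / (25 * c ^ 2)) (25 / (4 * γ ^ 2)))
          ≤ Real.sqrt (25 / (4 * γ ^ 2)) := Real.sqrt_le_sqrt h1
      _ = 5 / (2 * γ) := by rw [h2, Real.sqrt_sq (by positivity)]
  refine ⟨c, gs, hc, hgs, ?_⟩
  intro jm g ε hg hg0 hgb hε0 hεrec
  have hgle : ∀ j, g (j + 1) ≤ g j := by
    intro j
    have h1 := (hgb j).1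
    have h2 : 0 ≤ β₁ * theta jm j ^ 2 * g j ^ 2 := by positivity
    linarith
  have hggs : ∀ j, g j ≤ gs := by
    intro j
    induction j with
    | zero => exact hg0
    | succ n ih => exact le_trans (hgle n) ih
  have haux : ∀ x : ℝ, 0 < x → x ≤ gs → c * x ≤ (1 / 5) * Real.sqrt x := by
    intro x hx hxgs
    have h1 : Real.sqrt x ≤ Real.sqrt gs := Real.sqrt_le_sqrt hxgs
    have h2 : Real.sqrt x * Real.sqrt x = x := Real.mul_self_sqrt hx.le
    have h3 : 0 ≤ Real.sqrt x := Real.sqrt_nonneg x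
    have h4 : c * Real.sqrt x ≤ 1 / 5 := by nlinarith
    nlinarith
  have key : ∀ j, c * g j ≤ min (ε j) ((1 / 5) * Real.sqrt (g j)) := by
    intro j
    induction j with
    | zero =>
      rw [hε0, min_self]
      exact haux (g 0) (hg 0) (hggs 0)
    | succ n ih =>
      have hrec := hεrec n
      set b : ℝ := min (ε n) ((1 / 5) * Real.sqrt (g n)) with hb_def
      clear_value b
      have hθ0 : 0 < theta jm n := theta_pos jm n
      have hθ1 : theta jm n ≤ 1 := theta_le_one jm n
      have hb1 : b ≤ (1 / 5) * Real.sqrt (g n) := hb_def ▸ min_le_right _ _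
      have hbsmall : b ≤ 1 / (2 * γ) := by
        have h1 : Real.sqrt (g n) ≤ Real.sqrt gs := Real.sqrt_le_sqrt (hggs n)
        calc b ≤ (1 / 5) * Real.sqrt (g n) := hb1
        _ ≤ (1 / 5) * Real.sqrt gs := by nlinarith
        _ ≤ (1 / 5) * (5 / (2 * γ)) := by nlinarith
        _ = 1 / (2 * γ) := by field_simp
      have hgn := hg n
      have hgn1 := hg (n + 1)
      have hgd := (hgb n).1
      have ha0 : 0 ≤ c * g n := by positivity
      have hmono : c * g n - γ * theta jm n ^ 2 * (c * g n) ^ 2 ≤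
          b - γ * theta jm n ^ 2 * b ^ 2 := by
        have hsum : γ * theta jm n ^ 2 * (b + c * g n) ≤ 1 := by
          have h1 : theta jm n ^ 2 ≤ 1 := by nlinarith
          have h2 : b + c * g n ≤ 2 * b := by linarith [ih]
          have h3 : 0 < γ * theta jm n ^ 2 := by positivity
          have hb0 : 0 ≤ b := le_trans ha0 ih
          have h2γb : 2 * γ * b ≤ 1 := by
            have := (le_div_iff₀ (by positivity : (0:ℝ) < 2 * γ)).mp hbsmall
            linarith
          calc γ * theta jm n ^ 2 * (b + c * g n) ≤ γ * theta jm n ^ 2 * (2 * b) :=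
                mul_le_mul_of_nonneg_left h2 h3.le
          _ ≤ γ * 1 * (2 * b) := by
                nlinarith [mul_nonneg (mul_nonneg hγ.le hb0) (sub_nonneg.2 h1)]
          _ = 2 * γ * b := by ring
          _ ≤ 1 := h2γb
        have hprod := mul_nonneg (sub_nonneg.2 ih) (sub_nonneg.2 hsum)
        nlinarith [hprod]
      have hstep : c * g (n + 1) ≤ c * g n - γ * theta jm n ^ 2 * (c * g n) ^ 2 := by
        have h1 : g (n + 1) ≤ g n - β₁ * theta jm n ^ 2 * g n ^ 2 := by linarith
        have h3 : 0 ≤ theta jm n ^ 2 * g n ^ 2 := by positivity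
        have h2 : γ * c ^ 2 * (theta jm n ^ 2 * g n ^ 2) ≤
            c * β₁ * (theta jm n ^ 2 * g n ^ 2) := by
          nlinarith [mul_nonneg (mul_nonneg (sub_nonneg.2 hcγ) hc.le) h3]
        nlinarith
      have hε1 : c * g (n + 1) ≤ ε (n + 1) := by
        calc c * g (n + 1) ≤ c * g n - γ * theta jm n ^ 2 * (c * g n) ^ 2 := hstep
        _ ≤ b - γ * theta jm n ^ 2 * b ^ 2 := hmono
        _ ≤ ε (n + 1) := hrec
      exact le_min hε1 (haux (g (n + 1)) (hg (n + 1)) (hggs (n + 1)))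
  intro j
  exact le_trans (key j) (min_le_left _ _)
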